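/- In the setting of Theorem 1, the function u₂ = g₀ · Σ_{odd n ≥ 1} (ω^n/n!) X^(n) satisfies (p u₂')'(x) + q(x) u₂(x) = ω² u₂(x) for all x ∈ (0,a), for every ω ∈ ℂ. -/

import Mathlib

open MeasureTheory Set Filter

/-- The sequence X̃^(n) of Theorem 1: X̃^(0) ≡ 1; for n ≥ 1,
X̃^(n)(x) = n ∫₀ˣ X̃^(n-1)(ξ) g₀²(ξ) dξ if n is odd, and
X̃^(n)(x) = n ∫₀ˣ X̃^(n-1)(ξ) g⁻²(ξ) dξ if n is even, where g² = p g₀². -/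
noncomputable def Ytilde (p g₀ : ℝ → ℂ) : ℕ → ℝ → ℂ
  | 0 => fun _ => 1
  | n + 1 => fun x => ((n + 1 : ℕ) : ℂ) *
      ∫ ξ in (0:ℝ)..x, Ytilde p g₀ n ξ *
        (if Even (n + 1) then (p ξ * g₀ ξ ^ 2)⁻¹ else g₀ ξ ^ 2)

/-- The sequence X^(n) of Theorem 1: X^(0) ≡ 1; for n ≥ 1,
X^(n)(x) = n ∫₀ˣ X^(n-1)(ξ) g⁻²(ξ) dξ if n is odd, and
X^(n)(x) = n ∫₀ˣ X^(n-1)(ξ) g₀²(ξ) dξ if n is even, where g² = p g₀². -/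
noncomputable def Yup (p g₀ : ℝ → ℂ) : ℕ → ℝ → ℂ
  | 0 => fun _ => 1
  | n + 1 => fun x => ((n + 1 : ℕ) : ℂ) *
      ∫ ξ in (0:ℝ)..x, Yup p g₀ n ξ *
        (if Even (n + 1) then g₀ ξ ^ 2 else (p ξ * g₀ ξ ^ 2)⁻¹)

/-- u₁ = g₀ Σ_{even n ≥ 0} (ω^n/n!) X̃^(n), summing over even indices n = 2k. -/
noncomputable def V₁ (p g₀ : ℝ → ℂ) (ω : ℂ) (x : ℝ) : ℂ :=
  g₀ x * ∑' k : ℕ, ω ^ (2 * k) / (Nat.factorial (2 * k) : ℂ) * Ytilde p g₀ (2 * k) x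

/-- u₂ = g₀ Σ_{odd n ≥ 1} (ω^n/n!) X^(n), summing over odd indices n = 2k+1. -/
noncomputable def V₂ (p g₀ : ℝ → ℂ) (ω : ℂ) (x : ℝ) : ℂ :=
  g₀ x * ∑' k : ℕ, ω ^ (2 * k + 1) / (Nat.factorial (2 * k + 1) : ℂ) * Yup p g₀ (2 * k + 1) x

noncomputable def rr (p g₀ : ℝ → ℂ) (n : ℕ) (ξ : ℝ) : ℂ :=
  if Even n then g₀ ξ ^ 2 else (p ξ * g₀ ξ ^ 2)⁻¹

noncomputable def hh (p g₀ : ℝ → ℂ) (ξ : ℝ) : ℝ :=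
  ‖(p ξ * g₀ ξ ^ 2)⁻¹‖ + ‖g₀ ξ ^ 2‖

noncomputable def FF (p g₀ : ℝ → ℂ) (y : ℝ) : ℝ := ∫ t in (0:ℝ)..y, hh p g₀ t

lemma Yup_succ (p g₀ : ℝ → ℂ) (n : ℕ) (x : ℝ) :
    Yup p g₀ (n+1) x = ((n + 1 : ℕ) : ℂ) *
      ∫ ξ in (0:ℝ)..x, Yup p g₀ n ξ * rr p g₀ (n+1) ξ := rfl

lemma rr_le (p g₀ : ℝ → ℂ) (n : ℕ) (ξ : ℝ) : ‖rr p g₀ n ξ‖ ≤ hh p g₀ ξ := by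
  unfold rr hh
  by_cases h : Even n <;> simp only [h, if_true, if_false]
  · exact le_add_of_nonneg_left (norm_nonneg _)
  · exact le_add_of_nonneg_right (norm_nonneg _)

section SPPS

variable {p g₀ : ℝ → ℂ} {a b : ℝ} (hb : 0 < b) (hba : b < a)
  (hcr : ∀ n, ContinuousOn (rr p g₀ n) (Ioo 0 a))
  (hint : ∀ n, IntervalIntegrable (rr p g₀ n) volume 0 b)

lemma hh_eq (ξ : ℝ) : hh p g₀ ξ = ‖rr p g₀ 1 ξ‖ + ‖rr p g₀ 0 ξ‖ := by
  simp [rr, hh]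

include hba hcr in
lemma hh_cont : ContinuousOn (hh p g₀) (Ioo 0 a) := by
  have : ContinuousOn (fun ξ => ‖rr p g₀ 1 ξ‖ + ‖rr p g₀ 0 ξ‖) (Ioo 0 a) :=
    ((hcr 1).norm.add (hcr 0).norm)
  simpa only [← hh_eq] using this

include hint in
lemma hh_int : IntervalIntegrable (hh p g₀) volume 0 b := by
  have : IntervalIntegrable (fun ξ => ‖rr p g₀ 1 ξ‖ + ‖rr p g₀ 0 ξ‖) volume 0 b :=
    (hint 1).norm.add (hint 0).norm
  simpa only [← hh_eq] using this

include hb hint in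
lemma hh_int' {y : ℝ} (hy : y ∈ Icc 0 b) : IntervalIntegrable (hh p g₀) volume 0 y :=
  (hh_int hint).mono_set (by rw [uIcc_of_le hy.1, uIcc_of_le hb.le]; exact Icc_subset_Icc_right hy.2)

include hb hint in
lemma FF_cont : ContinuousOn (FF p g₀) (Icc 0 b) := by
  have := intervalIntegral.continuousOn_primitive_interval
    (f := hh p g₀) (μ := volume) (a := 0) (b := b) ?_
  · rw [uIcc_of_le hb.le] at this
    exact this
  · rw [uIcc_of_le hb.le]
    exact (intervalIntegrable_iff_integrableOn_Icc_of_le hb.le).mp (hh_int hint)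

lemma hh_nonneg (ξ : ℝ) : 0 ≤ hh p g₀ ξ := add_nonneg (norm_nonneg _) (norm_nonneg _)

include hb hint in
lemma FF_nonneg {y : ℝ} (hy : y ∈ Icc 0 b) : 0 ≤ FF p g₀ y :=
  intervalIntegral.integral_nonneg hy.1 (fun ξ _ => hh_nonneg ξ)

include hb hint in
lemma FF_le {y : ℝ} (hy : y ∈ Icc 0 b) : FF p g₀ y ≤ FF p g₀ b := by
  have h1 : IntervalIntegrable (hh p g₀) volume 0 y := hh_int' hb hint hy
  have h2 : IntervalIntegrable (hh p g₀) volume y b :=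
    (hh_int hint).mono_set (by rw [uIcc_of_le hy.2, uIcc_of_le hb.le]; exact Icc_subset_Icc_left hy.1)
  have h3 : FF p g₀ y + ∫ t in y..b, hh p g₀ t = FF p g₀ b :=
    intervalIntegral.integral_add_adjacent_intervals h1 h2
  nlinarith [intervalIntegral.integral_nonneg (μ := volume) hy.2 (fun ξ _ => hh_nonneg (p := p) (g₀ := g₀) ξ), h3]

include hb hba hcr hint in
lemma FF_deriv {ξ : ℝ} (hξ : ξ ∈ Ioo 0 b) : HasDerivAt (FF p g₀) (hh p g₀ ξ) ξ := by
  have hmem : ξ ∈ Ioo 0 a := ⟨hξ.1, hξ.2.trans hba⟩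
  exact intervalIntegral.integral_hasDerivAt_right
    (hh_int' hb hint ⟨hξ.1.le, hξ.2.le⟩)
    ((hh_cont hba hcr).stronglyMeasurableAtFilter isOpen_Ioo _ hmem)
    ((hh_cont hba hcr).continuousAt (isOpen_Ioo.mem_nhds hmem))

end SPPS

section SPPS2
set_option linter.unusedSectionVars false

variable {p g₀ : ℝ → ℂ} {a b : ℝ} (hb : 0 < b) (hba : b < a)
  (hcr : ∀ n, ContinuousOn (rr p g₀ n) (Ioo 0 a))
  (hint : ∀ n, IntervalIntegrable (rr p g₀ n) volume 0 b)

include hb hba hcr hint in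
lemma Yup_key : ∀ n : ℕ, ContinuousOn (Yup p g₀ n) (Icc 0 b) ∧
    ∀ y ∈ Icc 0 b, ‖Yup p g₀ n y‖ ≤ FF p g₀ y ^ n := by
  intro n
  induction n with
  | zero => exact ⟨continuousOn_const, fun y _ => by simp [Yup]⟩
  | succ n ih =>
    obtain ⟨ihc, ihb⟩ := ih
    -- integrability of the integrand on 0..y for y ∈ Icc 0 b
    have hfint : ∀ y ∈ Icc 0 b,
        IntervalIntegrable (fun ξ => Yup p g₀ n ξ * rr p g₀ (n+1) ξ) volume 0 y := by
      intro y hy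
      have h1 : IntervalIntegrable (rr p g₀ (n+1)) volume 0 y :=
        (hint (n+1)).mono_set
          (by rw [uIcc_of_le hy.1, uIcc_of_le hb.le]; exact Icc_subset_Icc_right hy.2)
      exact h1.continuousOn_mul (ihc.mono (by rw [uIcc_of_le hy.1]; exact Icc_subset_Icc_right hy.2))
    constructor
    · -- continuity
      have hI : IntegrableOn (fun ξ => Yup p g₀ n ξ * rr p g₀ (n+1) ξ) (uIcc 0 b) volume := by
        rw [uIcc_of_le hb.le]
        exact (intervalIntegrable_iff_integrableOn_Icc_of_le hb.le).mp (hfint b (right_mem_Icc.mpr hb.le))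
      have hc := intervalIntegral.continuousOn_primitive_interval (μ := volume) hI
      rw [uIcc_of_le hb.le] at hc
      have : ContinuousOn (fun y => ((n+1:ℕ):ℂ) *
          ∫ ξ in (0:ℝ)..y, Yup p g₀ n ξ * rr p g₀ (n+1) ξ) (Icc 0 b) :=
        continuousOn_const.mul hc
      simpa only [← Yup_succ] using this
    · -- bound
      intro y hy
      have hFy : ∀ ξ ∈ Icc 0 y, FF p g₀ ξ ^ n * hh p g₀ ξ ≥ ‖Yup p g₀ n ξ * rr p g₀ (n+1) ξ‖ := by
        intro ξ hξ
        have hξb : ξ ∈ Icc 0 b := ⟨hξ.1, hξ.2.trans hy.2⟩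
        rw [norm_mul]
        exact mul_le_mul (ihb ξ hξb) (rr_le p g₀ (n+1) ξ) (norm_nonneg _)
          (pow_nonneg (FF_nonneg hb hint hξb) n)
      -- integrability of F^n * h on 0..y
      have hFhint : IntervalIntegrable (fun ξ => FF p g₀ ξ ^ n * hh p g₀ ξ) volume 0 y := by
        refine (hh_int' hb hint hy).continuousOn_mul ?_
        rw [uIcc_of_le hy.1]
        exact ((FF_cont hb hint).mono (Icc_subset_Icc_right hy.2)).pow n
      -- FTC2: ∫₀ʸ F^n h = F y ^ (n+1) / (n+1)
      have hFTC : ∫ ξ in (0:ℝ)..y, FF p g₀ ξ ^ n * hh p g₀ ξ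
          = FF p g₀ y ^ (n+1) / (n+1) := by
        have hder : ∀ ξ ∈ Ioo 0 y, HasDerivWithinAt (fun z => FF p g₀ z ^ (n+1) / (n+1))
            (FF p g₀ ξ ^ n * hh p g₀ ξ) (Ioi ξ) ξ := by
          intro ξ hξ
          have hξ' : ξ ∈ Ioo 0 b := ⟨hξ.1, hξ.2.trans_le hy.2⟩
          have h1 : HasDerivAt (fun z => FF p g₀ z ^ (n+1))
              ((n+1 : ℕ) * FF p g₀ ξ ^ n * hh p g₀ ξ) ξ := by
            simpa using (FF_deriv hb hba hcr hint hξ').fun_pow (n+1)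
          have h2 := h1.div_const (n+1 : ℝ)
          have : ((n+1:ℕ) : ℝ) * FF p g₀ ξ ^ n * hh p g₀ ξ / (n+1 : ℝ)
              = FF p g₀ ξ ^ n * hh p g₀ ξ := by
            have : ((n:ℝ)+1) ≠ 0 := by positivity
            push_cast
            field_simp
            try ring
          rw [this] at h2
          exact h2.hasDerivWithinAt
        have hcF : ContinuousOn (fun z => FF p g₀ z ^ (n+1) / (n+1)) (Icc 0 y) :=
          (((FF_cont hb hint).mono (Icc_subset_Icc_right hy.2)).pow (n+1)).div_const _
        have := intervalIntegral.integral_eq_sub_of_hasDeriv_right_of_le hy.1 hcF hder hFhint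
        rw [this]
        have hF0 : FF p g₀ 0 = 0 := by simp [FF]
        rw [hF0]
        simp
      calc ‖Yup p g₀ (n+1) y‖
          = ((n+1:ℕ):ℝ) * ‖∫ ξ in (0:ℝ)..y, Yup p g₀ n ξ * rr p g₀ (n+1) ξ‖ := by
            rw [Yup_succ, norm_mul]
            norm_num
            left
            have : ((n:ℂ)+1) = ((n+1:ℕ):ℂ) := by push_cast; ring
            rw [this, Complex.norm_natCast]
            push_cast
            ring
        _ ≤ ((n+1:ℕ):ℝ) * ∫ ξ in (0:ℝ)..y, ‖Yup p g₀ n ξ * rr p g₀ (n+1) ξ‖ := by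
            refine mul_le_mul_of_nonneg_left ?_ (by positivity)
            exact intervalIntegral.norm_integral_le_integral_norm hy.1
        _ ≤ ((n+1:ℕ):ℝ) * ∫ ξ in (0:ℝ)..y, FF p g₀ ξ ^ n * hh p g₀ ξ := by
            refine mul_le_mul_of_nonneg_left ?_ (by positivity)
            exact intervalIntegral.integral_mono_on hy.1 (hfint y hy).norm hFhint
              (fun ξ hξ => hFy ξ hξ)
        _ = FF p g₀ y ^ (n+1) := by
            rw [hFTC]
            have : ((n:ℝ)+1) ≠ 0 := by positivity
            push_cast
            field_simp
            try ring
  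
include hb hba hcr hint in
lemma Yup_hasDerivAt (n : ℕ) {y : ℝ} (hy : y ∈ Ioo 0 b) :
    HasDerivAt (Yup p g₀ (n+1)) (((n+1:ℕ):ℂ) * (Yup p g₀ n y * rr p g₀ (n+1) y)) y := by
  have hyb : y ∈ Icc 0 b := ⟨hy.1.le, hy.2.le⟩
  have hcY := (Yup_key hb hba hcr hint n).1
  have hcf : ContinuousOn (fun ξ => Yup p g₀ n ξ * rr p g₀ (n+1) ξ) (Ioo 0 b) :=
    (hcY.mono Ioo_subset_Icc_self).mul ((hcr (n+1)).mono (Ioo_subset_Ioo le_rfl hba.le))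
  have hfint : IntervalIntegrable (fun ξ => Yup p g₀ n ξ * rr p g₀ (n+1) ξ) volume 0 y := by
    have h1 : IntervalIntegrable (rr p g₀ (n+1)) volume 0 y :=
      (hint (n+1)).mono_set
        (by rw [uIcc_of_le hy.1.le, uIcc_of_le hb.le]; exact Icc_subset_Icc_right hy.2.le)
    exact h1.continuousOn_mul (hcY.mono (by rw [uIcc_of_le hy.1.le]; exact Icc_subset_Icc_right hy.2.le))
  have hd : HasDerivAt (fun u => ∫ ξ in (0:ℝ)..u, Yup p g₀ n ξ * rr p g₀ (n+1) ξ)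
      (Yup p g₀ n y * rr p g₀ (n+1) y) y :=
    intervalIntegral.integral_hasDerivAt_right hfint
      (hcf.stronglyMeasurableAtFilter isOpen_Ioo _ hy)
      (hcf.continuousAt (isOpen_Ioo.mem_nhds hy))
  have := hd.const_mul ((n+1:ℕ):ℂ)
  simpa only [← Yup_succ] using this

end SPPS2

example (f : ℝ → ℂ) (x : ℝ) (h : f =ᶠ[nhds x] fun _ => 0) : ∀ᶠ y in nhds x, f =ᶠ[nhds y] fun _ => 0 :=
  h.eventuallyEq_nhds

lemma nonvanish {g₀ : ℝ → ℂ} {a C : ℝ}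
    (hc : ContinuousOn g₀ (Ioo 0 a))
    (hC : ∀ y ∈ Icc 0 a, ‖(g₀ y)⁻¹‖ ≤ C)
    {x : ℝ} (hx : x ∈ Ioo 0 a) (hx0 : g₀ x ≠ 0) :
    ∀ y ∈ Ioo 0 a, g₀ y ≠ 0 := by
  by_contra h
  push_neg at h
  obtain ⟨z, hz, hz0⟩ := h
  have hCpos : 0 < C := by
    have h1 := hC x (Ioo_subset_Icc_self hx)
    have h2 : (g₀ x)⁻¹ ≠ 0 := inv_ne_zero hx0
    have := norm_pos_iff.mpr h2
    linarith
  have hbig : ∀ y ∈ Ioo 0 a, g₀ y ≠ 0 → C⁻¹ ≤ ‖g₀ y‖ := by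
    intro y hy hy0
    have h1 := hC y (Ioo_subset_Icc_self hy)
    rw [norm_inv] at h1
    have hpos : 0 < ‖g₀ y‖ := norm_pos_iff.mpr hy0
    rw [inv_le_comm₀ hpos hCpos] at h1
    exact h1
  set u : Set ℝ := {y | y ∈ Ioo 0 a ∧ g₀ y ≠ 0} with hu_def
  set v : Set ℝ := {y | y ∈ Ioo 0 a ∧ ‖g₀ y‖ < C⁻¹} with hv_def
  have hopen : ∀ y ∈ Ioo 0 a, ContinuousAt g₀ y :=
    fun y hy => hc.continuousAt (isOpen_Ioo.mem_nhds hy)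
  have hu : IsOpen u := by
    rw [isOpen_iff_mem_nhds]
    rintro y ⟨hy, hy0⟩
    filter_upwards [isOpen_Ioo.mem_nhds hy, (hopen y hy).eventually_ne hy0] with w h1 h2
    exact ⟨h1, h2⟩
  have hv : IsOpen v := by
    rw [isOpen_iff_mem_nhds]
    rintro y ⟨hy, hy0⟩
    have : ∀ᶠ w in nhds y, ‖g₀ w‖ < C⁻¹ :=
      ((hopen y hy).norm).eventually_lt_const hy0
    filter_upwards [isOpen_Ioo.mem_nhds hy, this] with w h1 h2
    exact ⟨h1, h2⟩
  have hcov : Ioo (0:ℝ) a ⊆ u ∪ v := by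
    intro y hy
    by_cases h0 : g₀ y = 0
    · exact Or.inr ⟨hy, by rw [h0]; simpa using inv_pos.mpr hCpos⟩
    · exact Or.inl ⟨hy, h0⟩
  obtain ⟨w, hws, hwu, hwv⟩ := isPreconnected_Ioo u v hu hv hcov
    ⟨x, hx, hx, hx0⟩ ⟨z, hz, hz, by rw [hz0]; simpa using inv_pos.mpr hCpos⟩
  exact absurd (hbig w hws hwu.2) (not_le.mpr hwv.2)

lemma series_hasDerivAt {s : Set ℝ} (hs : IsOpen s) (f f' : ℕ → ℝ → ℂ) (g : ℝ → ℂ)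
    (u : ℕ → ℝ) (hu : Summable u)
    (hder : ∀ k, ∀ y ∈ s, HasDerivAt (f k) (f' k y) y)
    (hbound : ∀ k, ∀ y ∈ s, ‖f' k y‖ ≤ u k)
    (hsum : ∀ y ∈ s, Filter.Tendsto (fun N => ∑ k ∈ Finset.range N, f k y) atTop (nhds (g y)))
    {y : ℝ} (hy : y ∈ s) : HasDerivAt g (∑' k, f' k y) y := by
  exact hasDerivAt_of_tendstoUniformlyOn hs
    (tendstoUniformlyOn_tsum_nat hu (fun k x hx => hbound k x hx))
    (Eventually.of_forall (fun N z hz => HasDerivAt.sum (fun k _ => hder k z hz)))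
    (fun z hz => by simpa [Finset.sum_apply] using hsum z hz) hy

lemma fact_succ_real (m : ℕ) : ((m+1).factorial : ℝ) = ((m+1:ℕ):ℝ) * (m.factorial : ℝ) := by
  exact_mod_cast congrArg (Nat.cast : ℕ → ℝ) (Nat.factorial_succ m)

lemma coeff_real (t : ℝ) (m : ℕ) :
    (t^(m+1) / ((m+1).factorial:ℝ)) * ((m+1:ℕ):ℝ) = t * (t^m/((m.factorial):ℝ)) := by
  rw [fact_succ_real]
  have h1 : ((m+1:ℕ):ℝ) ≠ 0 := by positivity
  have h2 : ((m.factorial):ℝ) ≠ 0 := by exact_mod_cast (Nat.factorial_ne_zero m)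
  field_simp
  ring

lemma coeff_complex (ω : ℂ) (m : ℕ) :
    (ω^(m+1) / ((m+1).factorial:ℂ)) * ((m+1:ℕ):ℂ) = ω * (ω^m/((m.factorial):ℂ)) := by
  have hf : ((m+1).factorial : ℂ) = ((m+1:ℕ):ℂ) * (m.factorial : ℂ) := by
    exact_mod_cast congrArg (Nat.cast : ℕ → ℂ) (Nat.factorial_succ m)
  have h1 : ((m+1:ℕ):ℂ) ≠ 0 := Nat.cast_ne_zero.mpr (Nat.succ_ne_zero m)
  rw [hf, mul_comm, mul_div_assoc', mul_div_mul_left _ _ h1, pow_succ, mul_comm (ω^m) ω,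
    mul_div_assoc]

lemma norm_coeff (ω : ℂ) (m : ℕ) :
    ‖ω^m / ((m.factorial):ℂ)‖ = ‖ω‖^m / ((m.factorial):ℝ) := by
  rw [norm_div, norm_pow]
  norm_num

lemma inj21 : Function.Injective (fun k : ℕ => 2*k+1) := fun a b h => by
  have h' : 2*a+1 = 2*b+1 := h
  omega

lemma inj20 : Function.Injective (fun k : ℕ => 2*k) := fun a b h => by
  have h' : 2*a = 2*b := h
  omega

lemma inj22 : Function.Injective (fun k : ℕ => 2*k+2) := fun a b h => by
  have h' : 2*a+2 = 2*b+2 := h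
  omega

lemma summ_aux (t c : ℝ) (j : ℕ → ℕ) (hj : Function.Injective j) :
    Summable (fun k => c * (t^(j k)/((j k).factorial : ℝ))) := by
  have := (Real.summable_pow_div_factorial t).comp_injective hj
  exact this.mul_left c

example (k : ℕ) : Function.Injective (fun k : ℕ => 2*k) := fun a b h => by dsimp at h; omega
example (n : ℕ) (z : ℂ) : ‖((n:ℕ):ℂ)‖ = ((n:ℕ):ℝ) := by norm_num

noncomputable def SS (p g₀ : ℝ → ℂ) (ω : ℂ) (y : ℝ) : ℂ :=
  ∑' k : ℕ, ω ^ (2 * k + 1) / (Nat.factorial (2 * k + 1) : ℂ) * Yup p g₀ (2 * k + 1) y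

noncomputable def TT (p g₀ : ℝ → ℂ) (ω : ℂ) (y : ℝ) : ℂ :=
  ∑' k : ℕ, ω ^ (2 * k) / (Nat.factorial (2 * k) : ℂ) * Yup p g₀ (2 * k) y

noncomputable def TT1 (p g₀ : ℝ → ℂ) (ω : ℂ) (y : ℝ) : ℂ :=
  ∑' k : ℕ, ω ^ (2 * k + 2) / (Nat.factorial (2 * k + 2) : ℂ) * Yup p g₀ (2 * k + 2) y

lemma V₂_eq_SS (p g₀ : ℝ → ℂ) (ω : ℂ) : V₂ p g₀ ω = fun y => g₀ y * SS p g₀ ω y := rfl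

lemma rr_odd (p g₀ : ℝ → ℂ) (k : ℕ) (ξ : ℝ) :
    rr p g₀ (2*k+1) ξ = (p ξ * g₀ ξ ^ 2)⁻¹ := by
  simp [rr, Nat.even_add_one, parity_simps]

lemma rr_even (p g₀ : ℝ → ℂ) (k : ℕ) (ξ : ℝ) :
    rr p g₀ (2*k+2) ξ = g₀ ξ ^ 2 := by
  have h : Even (2*k+2) := ⟨k+1, by ring⟩
  simp [rr, h]

lemma aux_zero (p q g₀ : ℝ → ℂ) (ω : ℂ) (x : ℝ)
    (hV : V₂ p g₀ ω =ᶠ[nhds x] fun _ => 0) :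
    deriv (fun y => p y * deriv (V₂ p g₀ ω) y) x + q x * V₂ p g₀ ω x
      = ω ^ 2 * V₂ p g₀ ω x := by
  have h1 : ∀ᶠ y in nhds x, deriv (V₂ p g₀ ω) y = 0 := by
    filter_upwards [hV.eventuallyEq_nhds] with y hy
    rw [hy.deriv_eq]
    simp
  have h2 : (fun y => p y * deriv (V₂ p g₀ ω) y) =ᶠ[nhds x] fun _ => (0:ℂ) := by
    filter_upwards [h1] with y hy
    rw [hy, mul_zero]
  rw [h2.deriv_eq, hV.self_of_nhds]
  simp

/-- in the setting of Theorem 1, u₂ = g₀ Σ_{odd n} (ω^n/n!) X^(n)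
satisfies (p u₂')'(x) + q(x) u₂(x) = ω² u₂(x) for all x ∈ (0,a) and every ω ∈ ℂ. -/
theorem stmt_15
    (a : ℝ) (ha : 0 < a) (p q g₀ : ℝ → ℂ)
    (hp : ContDiffOn ℝ 1 p (Set.Ioo 0 a))
    (hpb : ∃ C : ℝ, ∀ x ∈ Set.Icc 0 a, ‖p x‖ ≤ C)
    (hp0 : ∀ x ∈ Set.Icc 0 a, p x ≠ 0)
    (hg : ContDiffOn ℝ 2 g₀ (Set.Ioo 0 a))
    (hgsol : ∀ x ∈ Set.Ioo 0 a, deriv (fun y => p y * deriv g₀ y) x + q x * g₀ x = 0)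
    (hgb : ∃ C : ℝ, ∀ x ∈ Set.Icc 0 a, ‖g₀ x‖ ≤ C ∧ ‖(g₀ x)⁻¹‖ ≤ C)
    (ω : ℂ)
    :
    ∀ x ∈ Set.Ioo 0 a,
      deriv (fun y => p y * deriv (V₂ p g₀ ω) y) x + q x * V₂ p g₀ ω x
        = ω ^ 2 * V₂ p g₀ ω x := by
  intro x hx
  obtain ⟨C, hC⟩ := hgb
  have hg₀c : ContinuousOn g₀ (Ioo 0 a) := hg.continuousOn
  have hxI : x ∈ Icc 0 a := Ioo_subset_Icc_self hx
  by_cases hg0 : g₀ x = 0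
  · -- degenerate case : g₀ vanishes near x, so V₂ vanishes near x
    by_cases hCpos : 0 < C
    · have hcont : ContinuousAt g₀ x := hg₀c.continuousAt (isOpen_Ioo.mem_nhds hx)
      have h1 : ∀ᶠ y in nhds x, ‖g₀ y‖ < C⁻¹ := by
        have : ContinuousAt (fun y => ‖g₀ y‖) x := hcont.norm
        apply this.eventually_lt_const
        show ‖g₀ x‖ < C⁻¹
        rw [hg0]
        simpa using inv_pos.mpr hCpos
      have hV : V₂ p g₀ ω =ᶠ[nhds x] fun _ => (0:ℂ) := by
        filter_upwards [h1, isOpen_Ioo.mem_nhds hx] with y hy1 hy2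
        have hy0 : g₀ y = 0 := by
          by_contra h0
          have hb := (hC y (Ioo_subset_Icc_self hy2)).2
          rw [norm_inv] at hb
          have hpos : 0 < ‖g₀ y‖ := norm_pos_iff.mpr h0
          rw [inv_le_comm₀ hpos hCpos] at hb
          linarith
        simp [V₂, hy0]
      exact aux_zero p q g₀ ω x hV
    · -- C ≤ 0 : g₀ ≡ 0 on Icc 0 a
      push_neg at hCpos
      have hV : V₂ p g₀ ω =ᶠ[nhds x] fun _ => (0:ℂ) := by
        filter_upwards [isOpen_Ioo.mem_nhds hx] with y hy
        have : g₀ y = 0 := by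
          have := (hC y (Ioo_subset_Icc_self hy)).1
          have h0 : ‖g₀ y‖ = 0 := le_antisymm (this.trans hCpos) (norm_nonneg _)
          exact norm_eq_zero.mp h0
        simp [V₂, this]
      exact aux_zero p q g₀ ω x hV
  · -- main case : g₀ x ≠ 0, hence g₀ ≠ 0 on all of Ioo 0 a
    have hg0all : ∀ y ∈ Ioo 0 a, g₀ y ≠ 0 :=
      nonvanish hg₀c (fun y hy => (hC y hy).2) hx hg0
    set b := (x + a)/2 with hbdef
    have hxb : x < b := by simp only [hbdef]; linarith [hx.2]
    have hba : b < a := by simp only [hbdef]; linarith [hx.2, hx.1]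
    have hb : (0:ℝ) < b := hx.1.trans hxb
    have hc1 : ContinuousOn (fun ξ => (p ξ * g₀ ξ ^ 2)⁻¹) (Ioo 0 a) := by
      refine (hp.continuousOn.mul (hg₀c.pow 2)).inv₀ ?_
      intro y hy
      exact mul_ne_zero (hp0 y (Ioo_subset_Icc_self hy)) (pow_ne_zero 2 (hg0all y hy))
    have hc2 : ContinuousOn (fun ξ => g₀ ξ ^ 2) (Ioo 0 a) := hg₀c.pow 2
    have hcr : ∀ n, ContinuousOn (rr p g₀ n) (Ioo 0 a) := by
      intro n
      by_cases he : Even n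
      · have h : rr p g₀ n = fun ξ => g₀ ξ ^ 2 := by funext ξ; simp [rr, he]
        rw [h]; exact hc2
      · have h : rr p g₀ n = fun ξ => (p ξ * g₀ ξ ^ 2)⁻¹ := by funext ξ; simp [rr, he]
        rw [h]; exact hc1
    by_cases hi1 : IntervalIntegrable (fun ξ => (p ξ * g₀ ξ ^ 2)⁻¹) volume 0 b
    · -- analytic case
      have hi2 : IntervalIntegrable (fun ξ => g₀ ξ ^ 2) volume 0 b := by
        rw [intervalIntegrable_iff_integrableOn_Icc_of_le hb.le,
          integrableOn_Icc_iff_integrableOn_Ioo]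
        refine ⟨(hc2.mono (fun y hy => ⟨hy.1, hy.2.trans hba⟩)).aestronglyMeasurable
            measurableSet_Ioo, ?_⟩
        refine HasFiniteIntegral.restrict_of_bounded (C := C^2) measure_Ioo_lt_top ?_
        refine (ae_restrict_iff' measurableSet_Ioo).mpr (Eventually.of_forall ?_)
        intro y hy
        rw [norm_pow]
        exact pow_le_pow_left₀ (norm_nonneg _)
          ((hC y ⟨hy.1.le, (hy.2.trans hba).le⟩).1) 2
      have hint : ∀ n, IntervalIntegrable (rr p g₀ n) volume 0 b := by
        intro n
        by_cases he : Even n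
        · have h : rr p g₀ n = fun ξ => g₀ ξ ^ 2 := by funext ξ; simp [rr, he]
          rw [h]; exact hi2
        · have h : rr p g₀ n = fun ξ => (p ξ * g₀ ξ ^ 2)⁻¹ := by funext ξ; simp [rr, he]
          rw [h]; exact hi1
      -- the working open set around x
      set x₁ := x/2 with hx₁def
      have hx₁ : 0 < x₁ := by simp only [hx₁def]; linarith [hx.1]
      have hx₁x : x₁ < x := by simp only [hx₁def]; linarith [hx.1]
      set s : Set ℝ := Ioo x₁ b with hsdef
      have hs : IsOpen s := isOpen_Ioo
      have hxs : x ∈ s := ⟨hx₁x, hxb⟩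
      have hsub : s ⊆ Ioo 0 a := fun y hy => ⟨hx₁.trans hy.1, hy.2.trans hba⟩
      have hsubI : s ⊆ Icc 0 b := fun y hy => ⟨(hx₁.trans hy.1).le, hy.2.le⟩
      have hsubB : s ⊆ Ioo 0 b := fun y hy => ⟨hx₁.trans hy.1, hy.2⟩
      have hsubC : Icc x₁ b ⊆ Ioo 0 a := fun y hy => ⟨hx₁.trans_le hy.1, hy.2.trans_lt hba⟩
      -- bounds
      obtain ⟨M, hM⟩ := (isCompact_Icc (a := x₁) (b := b)).exists_bound_of_continuousOn
        (hc1.mono hsubC)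
      set B := FF p g₀ b with hBdef
      have hbIcc : b ∈ Icc (0:ℝ) b := right_mem_Icc.mpr hb.le
      have hB0 : 0 ≤ B := FF_nonneg hb hint hbIcc
      have hYb : ∀ n, ∀ y ∈ Icc 0 b, ‖Yup p g₀ n y‖ ≤ B ^ n := by
        intro n y hy
        refine le_trans ((Yup_key hb hba hcr hint n).2 y hy) ?_
        exact pow_le_pow_left₀ (FF_nonneg hb hint hy) (FF_le hb hint hy) n
      have hωB : ∀ (m : ℕ), ∀ y ∈ Icc 0 b,
          ‖ω ^ m / ((m.factorial : ℕ) : ℂ) * Yup p g₀ m y‖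
            ≤ (‖ω‖*B)^m / ((m.factorial : ℕ) : ℝ) := by
        intro m y hy
        rw [norm_mul, norm_coeff, mul_pow]
        calc ‖ω‖^m / ((m.factorial:ℕ):ℝ) * ‖Yup p g₀ m y‖
            ≤ ‖ω‖^m / ((m.factorial:ℕ):ℝ) * B^m := by
              refine mul_le_mul_of_nonneg_left (hYb m y hy) (by positivity)
          _ = ‖ω‖^m * B^m / ((m.factorial:ℕ):ℝ) := div_mul_eq_mul_div _ _ _
      have hsummS : ∀ y ∈ Icc 0 b,
          Summable (fun k : ℕ => ω ^ (2*k+1) / (((2*k+1).factorial : ℕ) : ℂ)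
            * Yup p g₀ (2*k+1) y) := by
        intro y hy
        refine Summable.of_norm_bounded
          (g := fun k => (‖ω‖*B)^(2*k+1) / (((2*k+1).factorial : ℕ) : ℝ)) ?_ ?_
        · exact (Real.summable_pow_div_factorial (‖ω‖*B)).comp_injective inj21
        · intro k; exact hωB (2*k+1) y hy
      have hsummT : ∀ y ∈ Icc 0 b,
          Summable (fun k : ℕ => ω ^ (2*k) / (((2*k).factorial : ℕ) : ℂ)
            * Yup p g₀ (2*k) y) := by
        intro y hy
        refine Summable.of_norm_bounded
          (g := fun k => (‖ω‖*B)^(2*k) / (((2*k).factorial : ℕ) : ℝ)) ?_ ?_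
        · exact (Real.summable_pow_div_factorial (‖ω‖*B)).comp_injective inj20
        · intro k; exact hωB (2*k) y hy
      have hsummT1 : ∀ y ∈ Icc 0 b,
          Summable (fun k : ℕ => ω ^ (2*k+2) / (((2*k+2).factorial : ℕ) : ℂ)
            * Yup p g₀ (2*k+2) y) := by
        intro y hy
        refine Summable.of_norm_bounded
          (g := fun k => (‖ω‖*B)^(2*k+2) / (((2*k+2).factorial : ℕ) : ℝ)) ?_ ?_
        · exact (Real.summable_pow_div_factorial (‖ω‖*B)).comp_injective inj22
        · intro k; exact hωB (2*k+2) y hy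
      -- uniform bound for the S-derivative series
      have hM0 : 0 ≤ M := le_trans (norm_nonneg _)
        (hM b (right_mem_Icc.mpr (hx₁x.trans hxb).le))
      have hbS : ∀ (k : ℕ), ∀ z ∈ s,
          ‖ω ^ (2*k+1) / (((2*k+1).factorial : ℕ) : ℂ)
            * (((2*k+1:ℕ):ℂ) * (Yup p g₀ (2*k) z * rr p g₀ (2*k+1) z))‖
          ≤ (‖ω‖ * M) * ((‖ω‖*B)^(2*k) / (((2*k).factorial : ℕ) : ℝ)) := by
        intro k z hz
        rw [norm_mul, norm_mul, norm_mul, norm_coeff]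
        have e1 : ‖((2*k+1:ℕ):ℂ)‖ = ((2*k+1:ℕ):ℝ) := Complex.norm_natCast _
        rw [e1]
        have b1 : ‖Yup p g₀ (2*k) z‖ ≤ B^(2*k) := hYb (2*k) z (hsubI hz)
        have b2 : ‖rr p g₀ (2*k+1) z‖ ≤ M := by
          rw [rr_odd]; exact hM z ⟨hz.1.le, hz.2.le⟩
        calc ‖ω‖^(2*k+1) / (((2*k+1).factorial:ℕ):ℝ)
            * (((2*k+1:ℕ):ℝ) * (‖Yup p g₀ (2*k) z‖ * ‖rr p g₀ (2*k+1) z‖))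
            ≤ ‖ω‖^(2*k+1) / (((2*k+1).factorial:ℕ):ℝ)
            * (((2*k+1:ℕ):ℝ) * (B^(2*k) * M)) := by
              refine mul_le_mul_of_nonneg_left ?_ (by positivity)
              refine mul_le_mul_of_nonneg_left ?_ (by positivity)
              exact mul_le_mul b1 b2 (norm_nonneg _) (by positivity)
          _ = (‖ω‖ * M) * ((‖ω‖*B)^(2*k) / (((2*k).factorial : ℕ) : ℝ)) := by
              have hco := coeff_real ‖ω‖ (2*k)
              rw [mul_pow]
              calc ‖ω‖^(2*k+1) / (((2*k+1).factorial:ℕ):ℝ) * (((2*k+1:ℕ):ℝ) * (B^(2*k) * M))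
                  = (‖ω‖^(2*k+1) / (((2*k+1).factorial:ℕ):ℝ) * ((2*k+1:ℕ):ℝ))
                    * (B^(2*k) * M) := by ring
                _ = (‖ω‖ * (‖ω‖^(2*k) / (((2*k).factorial:ℕ):ℝ))) * (B^(2*k) * M) := by
                    rw [hco]
                _ = (‖ω‖ * M) * (‖ω‖^(2*k) * B^(2*k) / (((2*k).factorial : ℕ) : ℝ)) := by
                    ring
      -- derivative of S
      have hS' : ∀ y ∈ s, HasDerivAt (SS p g₀ ω) (ω * (p y * g₀ y ^ 2)⁻¹ * TT p g₀ ω y) y := by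
        intro y hy
        have hder := series_hasDerivAt hs
          (fun k z => ω ^ (2*k+1) / (((2*k+1).factorial : ℕ) : ℂ) * Yup p g₀ (2*k+1) z)
          (fun k z => ω ^ (2*k+1) / (((2*k+1).factorial : ℕ) : ℂ)
            * (((2*k+1:ℕ):ℂ) * (Yup p g₀ (2*k) z * rr p g₀ (2*k+1) z)))
          (SS p g₀ ω)
          (fun k => (‖ω‖ * M) * ((‖ω‖*B)^(2*k) / (((2*k).factorial : ℕ) : ℝ)))
          (summ_aux _ _ _ inj20)
          (fun k z hz => ((Yup_hasDerivAt hb hba hcr hint (2*k) (hsubB hz)).const_mul _))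
          hbS
          (fun z hz => (hsummS z (hsubI hz)).hasSum.tendsto_sum_nat)
          hy
        have heq : (∑' k : ℕ, ω ^ (2*k+1) / (((2*k+1).factorial : ℕ) : ℂ)
            * (((2*k+1:ℕ):ℂ) * (Yup p g₀ (2*k) y * rr p g₀ (2*k+1) y)))
            = ω * (p y * g₀ y ^ 2)⁻¹ * TT p g₀ ω y := by
          have h1 : ∀ k : ℕ, ω ^ (2*k+1) / (((2*k+1).factorial : ℕ) : ℂ)
              * (((2*k+1:ℕ):ℂ) * (Yup p g₀ (2*k) y * rr p g₀ (2*k+1) y))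
              = (ω * (p y * g₀ y ^ 2)⁻¹)
                * (ω ^ (2*k) / (((2*k).factorial : ℕ) : ℂ) * Yup p g₀ (2*k) y) := by
            intro k
            rw [rr_odd]
            have hco := coeff_complex ω (2*k)
            calc ω ^ (2*k+1) / (((2*k+1).factorial : ℕ) : ℂ)
                * (((2*k+1:ℕ):ℂ) * (Yup p g₀ (2*k) y * (p y * g₀ y ^ 2)⁻¹))
                = (ω ^ (2*k+1) / (((2*k+1).factorial : ℕ) : ℂ) * ((2*k+1:ℕ):ℂ))
                  * (Yup p g₀ (2*k) y * (p y * g₀ y ^ 2)⁻¹) := by ring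
              _ = (ω * (ω ^ (2*k) / (((2*k).factorial : ℕ) : ℂ)))
                  * (Yup p g₀ (2*k) y * (p y * g₀ y ^ 2)⁻¹) := by rw [hco]
              _ = (ω * (p y * g₀ y ^ 2)⁻¹)
                * (ω ^ (2*k) / (((2*k).factorial : ℕ) : ℂ) * Yup p g₀ (2*k) y) := by ring
          rw [tsum_congr h1, tsum_mul_left]
          rfl
        rw [← heq]
        exact hder
      -- uniform bound for the T1-derivative series
      have hbT : ∀ (k : ℕ), ∀ z ∈ s,
          ‖ω ^ (2*k+2) / (((2*k+2).factorial : ℕ) : ℂ)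
            * (((2*k+2:ℕ):ℂ) * (Yup p g₀ (2*k+1) z * rr p g₀ (2*k+2) z))‖
          ≤ (‖ω‖ * C^2) * ((‖ω‖*B)^(2*k+1) / (((2*k+1).factorial : ℕ) : ℝ)) := by
        intro k z hz
        rw [norm_mul, norm_mul, norm_mul, norm_coeff]
        have e1 : ‖((2*k+2:ℕ):ℂ)‖ = ((2*k+2:ℕ):ℝ) := Complex.norm_natCast _
        rw [e1]
        have b1 : ‖Yup p g₀ (2*k+1) z‖ ≤ B^(2*k+1) := hYb (2*k+1) z (hsubI hz)
        have hzA : z ∈ Icc 0 a := Ioo_subset_Icc_self (hsub hz)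
        have b2 : ‖rr p g₀ (2*k+2) z‖ ≤ C^2 := by
          rw [rr_even, norm_pow]
          exact pow_le_pow_left₀ (norm_nonneg _) (hC z hzA).1 2
        have hC0 : 0 ≤ C := le_trans (norm_nonneg _) (hC z hzA).1
        calc ‖ω‖^(2*k+2) / (((2*k+2).factorial:ℕ):ℝ)
            * (((2*k+2:ℕ):ℝ) * (‖Yup p g₀ (2*k+1) z‖ * ‖rr p g₀ (2*k+2) z‖))
            ≤ ‖ω‖^(2*k+2) / (((2*k+2).factorial:ℕ):ℝ)
            * (((2*k+2:ℕ):ℝ) * (B^(2*k+1) * C^2)) := by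
              refine mul_le_mul_of_nonneg_left ?_ (by positivity)
              refine mul_le_mul_of_nonneg_left ?_ (by positivity)
              exact mul_le_mul b1 b2 (norm_nonneg _) (by positivity)
          _ = (‖ω‖ * C^2) * ((‖ω‖*B)^(2*k+1) / (((2*k+1).factorial : ℕ) : ℝ)) := by
              have hco : ‖ω‖^(2*k+2) / (((2*k+2).factorial:ℕ):ℝ) * ((2*k+2:ℕ):ℝ)
                  = ‖ω‖ * (‖ω‖^(2*k+1) / (((2*k+1).factorial:ℕ):ℝ)) := coeff_real ‖ω‖ (2*k+1)
              rw [mul_pow]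
              calc ‖ω‖^(2*k+2) / (((2*k+2).factorial:ℕ):ℝ)
                  * (((2*k+2:ℕ):ℝ) * (B^(2*k+1) * C^2))
                  = (‖ω‖^(2*k+2) / (((2*k+2).factorial:ℕ):ℝ) * ((2*k+2:ℕ):ℝ))
                    * (B^(2*k+1) * C^2) := by ring
                _ = (‖ω‖ * (‖ω‖^(2*k+1) / (((2*k+1).factorial:ℕ):ℝ)))
                    * (B^(2*k+1) * C^2) := by rw [hco]
                _ = (‖ω‖ * C^2) * (‖ω‖^(2*k+1) * B^(2*k+1) / (((2*k+1).factorial : ℕ) : ℝ)) := by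
                    ring
      -- derivative of T1
      have hT1' : ∀ y ∈ s, HasDerivAt (TT1 p g₀ ω) (ω * g₀ y ^ 2 * SS p g₀ ω y) y := by
        intro y hy
        have hder := series_hasDerivAt hs
          (fun k z => ω ^ (2*k+2) / (((2*k+2).factorial : ℕ) : ℂ) * Yup p g₀ (2*k+2) z)
          (fun k z => ω ^ (2*k+2) / (((2*k+2).factorial : ℕ) : ℂ)
            * (((2*k+2:ℕ):ℂ) * (Yup p g₀ (2*k+1) z * rr p g₀ (2*k+2) z)))
          (TT1 p g₀ ω)
          (fun k => (‖ω‖ * C^2) * ((‖ω‖*B)^(2*k+1) / (((2*k+1).factorial : ℕ) : ℝ)))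
          (summ_aux _ _ _ inj21)
          (fun k z hz => ((Yup_hasDerivAt hb hba hcr hint (2*k+1) (hsubB hz)).const_mul _))
          hbT
          (fun z hz => (hsummT1 z (hsubI hz)).hasSum.tendsto_sum_nat)
          hy
        have heq : (∑' k : ℕ, ω ^ (2*k+2) / (((2*k+2).factorial : ℕ) : ℂ)
            * (((2*k+2:ℕ):ℂ) * (Yup p g₀ (2*k+1) y * rr p g₀ (2*k+2) y)))
            = ω * g₀ y ^ 2 * SS p g₀ ω y := by
          have h1 : ∀ k : ℕ, ω ^ (2*k+2) / (((2*k+2).factorial : ℕ) : ℂ)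
              * (((2*k+2:ℕ):ℂ) * (Yup p g₀ (2*k+1) y * rr p g₀ (2*k+2) y))
              = (ω * g₀ y ^ 2)
                * (ω ^ (2*k+1) / (((2*k+1).factorial : ℕ) : ℂ) * Yup p g₀ (2*k+1) y) := by
            intro k
            rw [rr_even]
            have hco : ω ^ (2*k+2) / (((2*k+2).factorial : ℕ) : ℂ) * ((2*k+2:ℕ):ℂ)
                = ω * (ω ^ (2*k+1) / (((2*k+1).factorial : ℕ) : ℂ)) := coeff_complex ω (2*k+1)
            calc ω ^ (2*k+2) / (((2*k+2).factorial : ℕ) : ℂ)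
                * (((2*k+2:ℕ):ℂ) * (Yup p g₀ (2*k+1) y * g₀ y ^ 2))
                = (ω ^ (2*k+2) / (((2*k+2).factorial : ℕ) : ℂ) * ((2*k+2:ℕ):ℂ))
                  * (Yup p g₀ (2*k+1) y * g₀ y ^ 2) := by ring
              _ = (ω * (ω ^ (2*k+1) / (((2*k+1).factorial : ℕ) : ℂ)))
                  * (Yup p g₀ (2*k+1) y * g₀ y ^ 2) := by rw [hco]
              _ = (ω * g₀ y ^ 2)
                * (ω ^ (2*k+1) / (((2*k+1).factorial : ℕ) : ℂ) * Yup p g₀ (2*k+1) y) := by ring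
          rw [tsum_congr h1, tsum_mul_left]
          rfl
        rw [← heq]
        exact hder
      -- T = 1 + T1 on Icc 0 b
      have hTeq : ∀ y ∈ Icc 0 b, TT p g₀ ω y = 1 + TT1 p g₀ ω y := by
        intro y hy
        have h0 := Summable.tsum_eq_zero_add (hsummT y hy)
        have h00 : ω ^ (2*0) / (((2*0).factorial : ℕ) : ℂ) * Yup p g₀ (2*0) y = 1 := by
          show ω ^ 0 / ((Nat.factorial 0 : ℕ) : ℂ) * Yup p g₀ 0 y = 1
          simp [Yup]
        rw [TT, h0, h00]
        rfl
      -- derivative of T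
      have hT' : ∀ y ∈ s, HasDerivAt (TT p g₀ ω) (ω * g₀ y ^ 2 * SS p g₀ ω y) y := by
        intro y hy
        have h1 : HasDerivAt (fun z => (1:ℂ) + TT1 p g₀ ω z) (ω * g₀ y ^ 2 * SS p g₀ ω y) y := by
          exact (hT1' y hy).const_add (1:ℂ)
        apply h1.congr_of_eventuallyEq
        filter_upwards [hs.mem_nhds hy] with z hz
        exact hTeq z (hsubI hz)
      -- derivative of V₂
      have hdg : ∀ y ∈ Ioo 0 a, HasDerivAt g₀ (deriv g₀ y) y := fun y hy =>
        ((hg.differentiableOn two_ne_zero).differentiableAt (isOpen_Ioo.mem_nhds hy)).hasDerivAt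
      have hVder : ∀ y ∈ s, HasDerivAt (V₂ p g₀ ω)
          (deriv g₀ y * SS p g₀ ω y + g₀ y * (ω * (p y * g₀ y ^ 2)⁻¹ * TT p g₀ ω y)) y := by
        intro y hy
        rw [V₂_eq_SS]
        exact (hdg y (hsub hy)).mul (hS' y hy)
      have hPev : (fun y => p y * deriv (V₂ p g₀ ω) y)
          =ᶠ[nhds x] (fun y => p y * deriv g₀ y * SS p g₀ ω y
            + ω / g₀ y * TT p g₀ ω y) := by
        filter_upwards [hs.mem_nhds hxs] with y hy
        rw [(hVder y hy).deriv]
        have hpy : p y ≠ 0 := hp0 y (Ioo_subset_Icc_self (hsub hy))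
        have hgy : g₀ y ≠ 0 := hg0all y (hsub hy)
        field_simp
      rw [hPev.deriv_eq]
      -- differentiability of p and deriv g₀ at x
      have hpd : DifferentiableAt ℝ p x :=
        (hp.differentiableOn one_ne_zero).differentiableAt (isOpen_Ioo.mem_nhds hx)
      have hg2 : ContDiffOn ℝ ((1:WithTop ℕ∞)+1) g₀ (Ioo 0 a) := by
        rw [one_add_one_eq_two]; exact hg
      have hder1 : ContDiffOn ℝ 1 (deriv g₀) (Ioo 0 a) :=
        ((contDiffOn_succ_iff_deriv_of_isOpen isOpen_Ioo).mp hg2).2.2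
      have hgd' : DifferentiableAt ℝ (deriv g₀) x :=
        (hder1.differentiableOn one_ne_zero).differentiableAt (isOpen_Ioo.mem_nhds hx)
      have hA : HasDerivAt (fun y => p y * deriv g₀ y)
          (deriv (fun y => p y * deriv g₀ y) x) x := (hpd.mul hgd').hasDerivAt
      have hinv : HasDerivAt (fun y => ω / g₀ y)
          ((0 * g₀ x - ω * deriv g₀ x) / g₀ x ^ 2) x :=
        (hasDerivAt_const x ω).div (hdg x hx) hg0
      have hQ : HasDerivAt (fun y => p y * deriv g₀ y * SS p g₀ ω y
            + ω / g₀ y * TT p g₀ ω y)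
          ((deriv (fun y => p y * deriv g₀ y) x * SS p g₀ ω x
            + (p x * deriv g₀ x) * (ω * (p x * g₀ x ^ 2)⁻¹ * TT p g₀ ω x))
           + (((0 * g₀ x - ω * deriv g₀ x) / g₀ x ^ 2) * TT p g₀ ω x
            + (ω / g₀ x) * (ω * g₀ x ^ 2 * SS p g₀ ω x))) x := by
        exact (hA.mul (hS' x hxs)).add (hinv.mul (hT' x hxs))
      rw [hQ.deriv]
      have hAval : deriv (fun y => p y * deriv g₀ y) x = -(q x * g₀ x) := by
        have h := hgsol x hx
        linear_combination h
      rw [hAval]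
      have hV2x : V₂ p g₀ ω x = g₀ x * SS p g₀ ω x := rfl
      rw [hV2x]
      have hpx : p x ≠ 0 := hp0 x hxI
      field_simp
      ring



    · -- non-integrable case : all Yup (n+1) vanish on Icc 0 b
      have hni : ∀ y ∈ Ioc 0 b, ¬ IntervalIntegrable (fun ξ => (p ξ * g₀ ξ ^ 2)⁻¹) volume 0 y := by
        intro y hy hcon
        apply hi1
        refine hcon.trans ?_
        apply ContinuousOn.intervalIntegrable
        apply hc1.mono
        rw [uIcc_of_le hy.2]
        exact fun z hz => ⟨hy.1.trans_le hz.1, hz.2.trans_lt hba⟩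
      have hzero : ∀ n, ∀ y ∈ Icc 0 b, Yup p g₀ (n+1) y = 0 := by
        intro n
        induction n with
        | zero =>
          intro y hy
          rcases eq_or_lt_of_le hy.1 with h | h
          · rw [Yup_succ, ← h]
            simp
          · rw [Yup_succ, intervalIntegral.integral_undef, mul_zero]
            intro hcon
            apply hni y ⟨h, hy.2⟩
            have : (fun ξ => Yup p g₀ 0 ξ * rr p g₀ 1 ξ)
                = fun ξ => (p ξ * g₀ ξ ^ 2)⁻¹ := by
              funext ξ
              simp [Yup, rr]
            rwa [this] at hcon
        | succ n ih =>
          intro y hy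
          rw [Yup_succ]
          have heq : EqOn (fun ξ => Yup p g₀ (n+1) ξ * rr p g₀ (n+2) ξ) (fun _ => (0:ℂ))
              (uIcc 0 y) := by
            intro ξ hξ
            rw [uIcc_of_le hy.1] at hξ
            simp only
            rw [ih ξ ⟨hξ.1, hξ.2.trans hy.2⟩, zero_mul]
          rw [intervalIntegral.integral_congr heq]
          simp
      have hV : V₂ p g₀ ω =ᶠ[nhds x] fun _ => (0:ℂ) := by
        have hmem : Ioo 0 b ∈ nhds x := isOpen_Ioo.mem_nhds ⟨hx.1, hxb⟩
        filter_upwards [hmem] with y hy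
        have hterm : ∀ k : ℕ, ω ^ (2*k+1) / ((2*k+1).factorial : ℂ) * Yup p g₀ (2*k+1) y = 0 := by
          intro k
          rw [hzero (2*k) y ⟨hy.1.le, hy.2.le⟩, mul_zero]
        simp only [V₂]
        rw [tsum_congr hterm]
        simp
      exact aux_zero p q g₀ ω x hV
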